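/- Let L ≥ 1, β > 0, and let γ_1 ≥ γ_2 ≥ … ≥ γ_L > 0. Let β_j ≥ 0 and p_j ≥ 0 for j = 1,…,L, with β_j · p_j > 0 for at least one j. Define R(ρ) := Σ_{j=1}^L β_j · log(1 + p_j · f(γ_j,β,ρ)) for ρ > 0. If ρ* > 0 satisfies R(ρ*) ≥ R(ρ) for all ρ > 0, then β/γ_1 ≤ ρ* ≤ β/γ_L. -/

import Mathlib

/-- The deterministic equivalent `g(β,ρ)`: the unique positive solution of
`g·(ρ + β/(1+g)) = 1`, given in closed form. -/
noncomputable def gfun (β ρ : ℝ) : ℝ :=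
  ((1 - ρ - β) + Real.sqrt ((ρ + β - 1) ^ 2 + 4 * ρ)) / (2 * ρ)

/-- The limiting SINR coefficient `f(γ,β,ρ)` at effective SNR γ. -/
noncomputable def ffun (γ β ρ : ℝ) : ℝ :=
  gfun β ρ * (γ + (γ * ρ / β) * (1 + gfun β ρ) ^ 2) / (γ + (1 + gfun β ρ) ^ 2)

lemma g_pos {β ρ : ℝ} (hβ : 0 < β) (hρ : 0 < ρ) : 0 < gfun β ρ := by
  unfold gfun
  have hs : Real.sqrt ((ρ + β - 1) ^ 2 + 4 * ρ) ^ 2 = (ρ + β - 1) ^ 2 + 4 * ρ :=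
    Real.sq_sqrt (by positivity)
  have hs0 : 0 ≤ Real.sqrt ((ρ + β - 1) ^ 2 + 4 * ρ) := Real.sqrt_nonneg _
  have : ρ + β - 1 < Real.sqrt ((ρ + β - 1) ^ 2 + 4 * ρ) := by nlinarith
  exact div_pos (by linarith) (by linarith)

lemma g_quad {β ρ : ℝ} (hβ : 0 < β) (hρ : 0 < ρ) :
    ρ * gfun β ρ * (1 + gfun β ρ) = 1 + (1 - β) * gfun β ρ := by
  have harg : (0:ℝ) ≤ (ρ + β - 1) ^ 2 + 4 * ρ := by positivity
  set s := Real.sqrt ((ρ + β - 1) ^ 2 + 4 * ρ) with hsdef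
  have hs : s ^ 2 = (ρ + β - 1) ^ 2 + 4 * ρ := Real.sq_sqrt harg
  have hg : gfun β ρ = ((1 - ρ - β) + s) / (2 * ρ) := rfl
  rw [hg]
  have hρ' : (2:ℝ) * ρ ≠ 0 := by positivity
  field_simp
  linear_combination hs

lemma g_aux_pos {β ρ : ℝ} (hβ : 0 < β) (hρ : 0 < ρ) :
    0 < 1 + (1 - β) * gfun β ρ := by
  rw [← g_quad hβ hρ]
  have hg := g_pos hβ hρ
  positivity

/-- g is strictly decreasing in ρ. -/
lemma g_anti {β ρ₁ ρ₂ : ℝ} (hβ : 0 < β) (hρ₁ : 0 < ρ₁) (h12 : ρ₁ < ρ₂) :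
    gfun β ρ₂ < gfun β ρ₁ := by
  have hρ₂ : 0 < ρ₂ := lt_trans hρ₁ h12
  set a := gfun β ρ₁ with ha
  set b := gfun β ρ₂ with hb
  have hapos : 0 < a := g_pos hβ hρ₁
  have hbpos : 0 < b := g_pos hβ hρ₂
  have h1 : ρ₁ * a * (1 + a) = 1 + (1 - β) * a := g_quad hβ hρ₁
  have h2 : ρ₂ * b * (1 + b) = 1 + (1 - β) * b := g_quad hβ hρ₂
  have h2pos : 0 < 1 + (1 - β) * b := g_aux_pos hβ hρ₂
  by_contra hcon
  push_neg at hcon  -- a ≤ b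
  have key : (ρ₁ - ρ₂) * (a * (1 + a) * (b * (1 + b))) =
      (b - a) * ((1 + a) * (1 + b) - β * a * b) := by
    linear_combination (b * (1 + b)) * h1 - (a * (1 + a)) * h2
  have hfac : 0 < (1 + a) * (1 + b) - β * a * b := by nlinarith
  nlinarith [mul_pos (mul_pos hapos (by linarith : (0:ℝ) < 1 + a))
    (mul_pos hbpos (by linarith : (0:ℝ) < 1 + b))]

/-- f rewritten in terms of g. -/
lemma f_eq {γ β ρ : ℝ} (hγ : 0 < γ) (hβ : 0 < β) (hρ : 0 < ρ) :
    ffun γ β ρ = γ * ((1 + gfun β ρ) ^ 2 - β * gfun β ρ ^ 2) /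
      (β * (γ + (1 + gfun β ρ) ^ 2)) := by
  set g := gfun β ρ with hg
  have hgpos : 0 < g := g_pos hβ hρ
  have hq : ρ * g * (1 + g) = 1 + (1 - β) * g := g_quad hβ hρ
  have hd : 0 < γ + (1 + g) ^ 2 := by positivity
  have hnum : β * (g * (γ + (γ * ρ / β) * (1 + g) ^ 2)) =
      γ * ((1 + g) ^ 2 - β * g ^ 2) := by
    field_simp
    linear_combination (1 + g) * hq
  rw [ffun, ← hg, div_eq_div_iff (ne_of_gt hd) (by positivity)]
  linear_combination (γ + (1 + g) ^ 2) * hnum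

lemma sq_sub_pos {β ρ : ℝ} (hβ : 0 < β) (hρ : 0 < ρ) :
    0 < (1 + gfun β ρ) ^ 2 - β * gfun β ρ ^ 2 := by
  have hg := g_pos hβ hρ
  have h := g_aux_pos hβ hρ  -- 0 < 1 + (1-β)g i.e. βg < 1+g
  nlinarith

lemma f_pos {γ β ρ : ℝ} (hγ : 0 < γ) (hβ : 0 < β) (hρ : 0 < ρ) :
    0 < ffun γ β ρ := by
  rw [f_eq hγ hβ hρ]
  have h1 := sq_sub_pos hβ hρ
  have hg := g_pos hβ hρ
  positivity

/-- f is strictly increasing on (0, β/γ]. -/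
lemma f_lt_left {γ β ρ₁ ρ₂ : ℝ} (hγ : 0 < γ) (hβ : 0 < β) (hρ₁ : 0 < ρ₁)
    (h12 : ρ₁ < ρ₂) (hc : γ * ρ₂ ≤ β) :
    ffun γ β ρ₁ < ffun γ β ρ₂ := by
  have hρ₂ : 0 < ρ₂ := lt_trans hρ₁ h12
  set a := gfun β ρ₁ with ha
  set b := gfun β ρ₂ with hb
  have hapos : 0 < a := g_pos hβ hρ₁
  have hbpos : 0 < b := g_pos hβ hρ₂
  have hba : b < a := g_anti hβ hρ₁ h12
  have h2 : ρ₂ * b * (1 + b) = 1 + (1 - β) * b := g_quad hβ hρ₂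
  have h2pos : 0 < 1 + (1 - β) * b := g_aux_pos hβ hρ₂
  have h1pos : 0 < 1 + (1 - β) * a := g_aux_pos hβ hρ₁
  -- condition at b : γ (1+(1-β)b) ≤ β b (1+b)
  have hcb : γ * (1 + (1 - β) * b) ≤ β * (b * (1 + b)) := by
    rw [← h2]
    have : γ * (ρ₂ * b * (1 + b)) = (γ * ρ₂) * (b * (1 + b)) := by ring
    rw [this]
    exact mul_le_mul_of_nonneg_right hc (by positivity)
  -- cross inequality
  have hcross : b * (1 + b) * (2 + (1 - β) * (a + b)) <
      (a + b + 2 * a * b) * (1 + (1 - β) * b) := by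
    have hq : 0 < (1 + b) ^ 2 - β * b ^ 2 := sq_sub_pos hβ hρ₂
    nlinarith [mul_pos (sub_pos.2 hba) hq]
  -- key inequality
  have hkey : γ * (2 + (1 - β) * (a + b)) < β * (a + b + 2 * a * b) := by
    have hsum : 0 < 2 + (1 - β) * (a + b) := by nlinarith
    have c1 : γ * (1 + (1 - β) * b) * (2 + (1 - β) * (a + b)) ≤
        β * (b * (1 + b)) * (2 + (1 - β) * (a + b)) :=
      mul_le_mul_of_nonneg_right hcb (le_of_lt hsum)
    have c2 : β * (b * (1 + b) * (2 + (1 - β) * (a + b))) <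
        β * ((a + b + 2 * a * b) * (1 + (1 - β) * b)) :=
      (mul_lt_mul_iff_right₀ hβ).2 hcross
    have := lt_of_le_of_lt (by linarith [c1] : γ * (1 + (1 - β) * b) * (2 + (1 - β) * (a + b)) ≤ β * (b * (1 + b) * (2 + (1 - β) * (a + b)))) c2
    have hfin : γ * (2 + (1 - β) * (a + b)) * (1 + (1 - β) * b) <
        β * (a + b + 2 * a * b) * (1 + (1 - β) * b) := by nlinarith [this]
    exact lt_of_mul_lt_mul_right (by linarith [hfin]) (le_of_lt h2pos)
  rw [f_eq hγ hβ hρ₁, f_eq hγ hβ hρ₂, ← ha, ← hb]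
  rw [div_lt_div_iff₀ (by positivity) (by positivity)]
  nlinarith [mul_pos (mul_pos hγ hβ) (mul_pos (sub_pos.2 hba) (sub_pos.2 hkey))]

/-- f is strictly decreasing on [β/γ, ∞). -/
lemma f_lt_right {γ β ρ₁ ρ₂ : ℝ} (hγ : 0 < γ) (hβ : 0 < β) (hρ₁ : 0 < ρ₁)
    (h12 : ρ₁ < ρ₂) (hc : β ≤ γ * ρ₁) :
    ffun γ β ρ₂ < ffun γ β ρ₁ := by
  have hρ₂ : 0 < ρ₂ := lt_trans hρ₁ h12
  set a := gfun β ρ₁ with ha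
  set b := gfun β ρ₂ with hb
  have hapos : 0 < a := g_pos hβ hρ₁
  have hbpos : 0 < b := g_pos hβ hρ₂
  have hba : b < a := g_anti hβ hρ₁ h12
  have h1 : ρ₁ * a * (1 + a) = 1 + (1 - β) * a := g_quad hβ hρ₁
  have h1pos : 0 < 1 + (1 - β) * a := g_aux_pos hβ hρ₁
  have h2pos : 0 < 1 + (1 - β) * b := g_aux_pos hβ hρ₂
  have hca : β * (a * (1 + a)) ≤ γ * (1 + (1 - β) * a) := by
    rw [← h1]
    have : γ * (ρ₁ * a * (1 + a)) = (γ * ρ₁) * (a * (1 + a)) := by ring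
    rw [this]
    exact mul_le_mul_of_nonneg_right hc (by positivity)
  have hcross : (a + b + 2 * a * b) * (1 + (1 - β) * a) <
      a * (1 + a) * (2 + (1 - β) * (a + b)) := by
    have hq : 0 < (1 + a) ^ 2 - β * a ^ 2 := sq_sub_pos hβ hρ₁
    nlinarith [mul_pos (sub_pos.2 hba) hq]
  have hkey : β * (a + b + 2 * a * b) < γ * (2 + (1 - β) * (a + b)) := by
    have hsum : 0 < 2 + (1 - β) * (a + b) := by nlinarith
    have c1 : β * (a * (1 + a)) * (2 + (1 - β) * (a + b)) ≤
        γ * (1 + (1 - β) * a) * (2 + (1 - β) * (a + b)) :=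
      mul_le_mul_of_nonneg_right hca (le_of_lt hsum)
    have c2 : β * ((a + b + 2 * a * b) * (1 + (1 - β) * a)) <
        β * (a * (1 + a) * (2 + (1 - β) * (a + b))) :=
      (mul_lt_mul_iff_right₀ hβ).2 hcross
    have hfin : β * (a + b + 2 * a * b) * (1 + (1 - β) * a) <
        γ * (2 + (1 - β) * (a + b)) * (1 + (1 - β) * a) := by nlinarith [c1, c2]
    exact lt_of_mul_lt_mul_right (by linarith [hfin]) (le_of_lt h1pos)
  rw [f_eq hγ hβ hρ₁, f_eq hγ hβ hρ₂, ← ha, ← hb]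
  rw [div_lt_div_iff₀ (by positivity) (by positivity)]
  nlinarith [mul_pos (mul_pos hγ hβ) (mul_pos (sub_pos.2 hba) (sub_pos.2 hkey))]

/-- With R(ρ) := Σ_j β_j·log(1 + p_j·f(γ_j,β,ρ)), if ρ* > 0
maximizes R over (0,∞), then β/γ_1 ≤ ρ* ≤ β/γ_L. -/
theorem optimal_rho_interval (L : ℕ) (hL : 1 ≤ L) (β : ℝ) (hβ : 0 < β)
    (γ : Fin L → ℝ) (hγpos : ∀ j, 0 < γ j)
    (hγsorted : ∀ i j : Fin L, i ≤ j → γ j ≤ γ i)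
    (βv p : Fin L → ℝ) (hβv : ∀ j, 0 ≤ βv j) (hp : ∀ j, 0 ≤ p j)
    (hex : ∃ j, 0 < βv j * p j)
    (ρstar : ℝ) (hρstar : 0 < ρstar)
    (hmax : ∀ ρ : ℝ, 0 < ρ →
      ∑ j, βv j * Real.log (1 + p j * ffun (γ j) β ρ) ≤
        ∑ j, βv j * Real.log (1 + p j * ffun (γ j) β ρstar)) :
    β / γ ⟨0, hL⟩ ≤ ρstar ∧ ρstar ≤ β / γ ⟨L - 1, by omega⟩ := by
  obtain ⟨j₀, hj₀⟩ := hex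
  have hβv₀ : 0 < βv j₀ := by
    rcases mul_pos_iff.1 hj₀ with ⟨h1, _⟩ | ⟨h1, _⟩
    · exact h1
    · exact absurd h1 (not_lt.2 (hβv j₀))
  have hp₀ : 0 < p j₀ := by
    rcases mul_pos_iff.1 hj₀ with ⟨_, h2⟩ | ⟨_, h2⟩
    · exact h2
    · exact absurd h2 (not_lt.2 (hp j₀))
  -- generic strict sum comparison
  have sum_step : ∀ ρ' : ℝ, (∀ j, ffun (γ j) β ρstar < ffun (γ j) β ρ') →
      ∑ j, βv j * Real.log (1 + p j * ffun (γ j) β ρstar) <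
        ∑ j, βv j * Real.log (1 + p j * ffun (γ j) β ρ') := by
    intro ρ' hlt
    apply Finset.sum_lt_sum
    · intro j _
      have hf1 : 0 < ffun (γ j) β ρstar := f_pos (hγpos j) hβ hρstar
      have hpos1 : (0:ℝ) < 1 + p j * ffun (γ j) β ρstar := by nlinarith [hp j]
      have hle : 1 + p j * ffun (γ j) β ρstar ≤ 1 + p j * ffun (γ j) β ρ' := by
        nlinarith [mul_le_mul_of_nonneg_left (le_of_lt (hlt j)) (hp j)]
      exact mul_le_mul_of_nonneg_left (Real.log_le_log hpos1 hle) (hβv j)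
    · refine ⟨j₀, Finset.mem_univ _, ?_⟩
      have hf1 : 0 < ffun (γ j₀) β ρstar := f_pos (hγpos j₀) hβ hρstar
      have hpos1 : (0:ℝ) < 1 + p j₀ * ffun (γ j₀) β ρstar := by nlinarith
      have hltt : 1 + p j₀ * ffun (γ j₀) β ρstar < 1 + p j₀ * ffun (γ j₀) β ρ' := by
        nlinarith [mul_lt_mul_of_pos_left (hlt j₀) hp₀]
      exact mul_lt_mul_of_pos_left (Real.log_lt_log hpos1 hltt) hβv₀
  constructor
  · by_contra hcon
    push_neg at hcon
    set ρ₂ := β / γ ⟨0, hL⟩ with hρ₂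
    have hγ0 : 0 < γ ⟨0, hL⟩ := hγpos _
    have hρ₂pos : 0 < ρ₂ := div_pos hβ hγ0
    have hlt : ∀ j, ffun (γ j) β ρstar < ffun (γ j) β ρ₂ := by
      intro j
      apply f_lt_left (hγpos j) hβ hρstar hcon
      have hle : γ j ≤ γ ⟨0, hL⟩ := hγsorted ⟨0, hL⟩ j (by simp [Fin.le_def])
      calc γ j * ρ₂ ≤ γ ⟨0, hL⟩ * ρ₂ := mul_le_mul_of_nonneg_right hle (le_of_lt hρ₂pos)
        _ = β := by rw [hρ₂]; field_simp
    have := sum_step ρ₂ hlt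
    linarith [hmax ρ₂ hρ₂pos]
  · by_contra hcon
    push_neg at hcon
    set ρ₁ := β / γ ⟨L - 1, by omega⟩ with hρ₁
    have hγL : 0 < γ ⟨L - 1, by omega⟩ := hγpos _
    have hρ₁pos : 0 < ρ₁ := div_pos hβ hγL
    have hlt : ∀ j, ffun (γ j) β ρstar < ffun (γ j) β ρ₁ := by
      intro j
      apply f_lt_right (hγpos j) hβ hρ₁pos hcon
      have hle : γ ⟨L - 1, by omega⟩ ≤ γ j :=
        hγsorted j ⟨L - 1, by omega⟩ (by simp [Fin.le_def]; omega)
      calc β = γ ⟨L - 1, by omega⟩ * ρ₁ := by rw [hρ₁]; field_simp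
        _ ≤ γ j * ρ₁ := mul_le_mul_of_nonneg_right hle (le_of_lt hρ₁pos)
    have := sum_step ρ₁ hlt
    linarith [hmax ρ₁ hρ₁pos]
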